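/- Let K ≥ 1 and Q ≥ 1 be integers, let g_1, …, g_K ∈ ℝ^Q satisfy ‖g_k‖² ≤ G² for all k (G ≥ 0), and let N_{f,1}, …, N_{f,K} be positive reals with N_f = ∑_{k=1}^K N_{f,k}. Let ḡ = (1/(K·Q))·∑_{k=1}^K ∑_{q=1}^Q g_{k,q} and let c_1, …, c_K ∈ ℂ. Define ĝ ∈ ℂ^Q componentwise by ĝ_q = ∑_{k=1}^K (N_{f,k}/N_f)·c_k·g_{k,q} + ∑_{k=1}^K (N_{f,k}/N_f)·(1 − c_k)·ḡ. Then ∑_{q=1}^Q |∑_{k=1}^K (N_{f,k}/N_f)·g_{k,q} − ĝ_q|² ≤ (4·K·G²/N_f²)·∑_{k=1}^K N_{f,k}²·|1 − c_k|². -/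

import Mathlib

/-- Noiseless over-the-air aggregation error bound (kernel of Lemma 2, error `e₃`):
with `c k` playing the role of `p_{f,k}·bᴴh_k`, the squared distance between the
desired aggregated gradient and the de-normalized received aggregate is at most
`(4KG²/N_f²)·∑_k N_{f,k}²·|1 − c_k|²`. -/
theorem semifl_aggregation_error_bound
    (K Q : ℕ) (hK : 1 ≤ K) (hQ : 1 ≤ Q)
    (g : Fin K → EuclideanSpace ℝ (Fin Q)) (G : ℝ) (hG : 0 ≤ G)
    (hg : ∀ k, ‖g k‖ ^ 2 ≤ G ^ 2)
    (Nf : Fin K → ℝ) (hNf : ∀ k, 0 < Nf k)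
    (NF : ℝ) (hNF : NF = ∑ k, Nf k)
    (gbar : ℝ) (hgbar : gbar = (1 / ((K : ℝ) * Q)) * ∑ k, ∑ q, g k q)
    (c : Fin K → ℂ) (ghat : Fin Q → ℂ)
    (hghat : ∀ q, ghat q =
      ∑ k, ((Nf k / NF : ℝ) : ℂ) * c k * ((g k q : ℝ) : ℂ)
        + ∑ k, ((Nf k / NF : ℝ) : ℂ) * (1 - c k) * ((gbar : ℝ) : ℂ)) :
    ∑ q, ‖∑ k, ((Nf k / NF : ℝ) : ℂ) * ((g k q : ℝ) : ℂ) - ghat q‖ ^ 2 ≤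
      4 * K * G ^ 2 / NF ^ 2 * ∑ k, Nf k ^ 2 * ‖1 - c k‖ ^ 2 := by
  have hNFpos : 0 < NF := by
    rw [hNF]
    exact Finset.sum_pos (fun k _ => hNf k) (Finset.univ_nonempty_iff.2 ⟨⟨0, hK⟩⟩)
  have hKpos : (0:ℝ) < K := by exact_mod_cast hK
  have hQpos : (0:ℝ) < Q := by exact_mod_cast hQ
  -- squared norms
  have hsq : ∀ k, ∑ q, (g k q) ^ 2 ≤ G ^ 2 := by
    intro k
    have h := hg k
    rw [EuclideanSpace.norm_eq] at h
    have : Real.sqrt (∑ q, ‖g k q‖ ^ 2) ^ 2 = ∑ q, ‖g k q‖ ^ 2 :=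
      Real.sq_sqrt (Finset.sum_nonneg fun q _ => sq_nonneg _)
    rw [this] at h
    simpa [Real.norm_eq_abs, sq_abs] using h
  -- bound on Q * gbar^2
  have hgbar_sq : (Q : ℝ) * gbar ^ 2 ≤ G ^ 2 := by
    have hS : (∑ k, ∑ q, g k q) ^ 2 ≤ (K : ℝ) * (Q : ℝ) * ((K : ℝ) * G ^ 2) := by
      have h1 : (∑ k : Fin K, ∑ q, g k q) ^ 2
          ≤ (K : ℝ) * ∑ k : Fin K, (∑ q, g k q) ^ 2 := by
        simpa using sq_sum_le_card_mul_sum_sq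
          (s := (Finset.univ : Finset (Fin K))) (f := fun k => ∑ q, g k q)
      have h2 : ∀ k : Fin K, (∑ q, g k q) ^ 2 ≤ (Q : ℝ) * G ^ 2 := by
        intro k
        have := sq_sum_le_card_mul_sum_sq
          (s := (Finset.univ : Finset (Fin Q))) (f := fun q => g k q)
        simp only [Finset.card_univ, Fintype.card_fin] at this
        calc (∑ q, g k q) ^ 2 ≤ (Q : ℝ) * ∑ q, (g k q) ^ 2 := this
          _ ≤ (Q : ℝ) * G ^ 2 := by
            exact mul_le_mul_of_nonneg_left (hsq k) hQpos.le
      calc (∑ k, ∑ q, g k q) ^ 2 ≤ (K : ℝ) * ∑ k : Fin K, (∑ q, g k q) ^ 2 := h1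
        _ ≤ (K : ℝ) * ((K : ℝ) * ((Q : ℝ) * G ^ 2)) := by
            apply mul_le_mul_of_nonneg_left _ hKpos.le
            calc ∑ k : Fin K, (∑ q, g k q) ^ 2 ≤ ∑ _k : Fin K, (Q : ℝ) * G ^ 2 :=
                Finset.sum_le_sum fun k _ => h2 k
              _ = (K : ℝ) * ((Q : ℝ) * G ^ 2) := by simp [mul_comm]
        _ = (K : ℝ) * (Q : ℝ) * ((K : ℝ) * G ^ 2) := by ring
    have hkey : gbar ^ 2 * ((K : ℝ) * Q) ^ 2 = (∑ k, ∑ q, g k q) ^ 2 := by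
      rw [hgbar]; field_simp
    nlinarith [hS, hkey, mul_pos (mul_pos hKpos hKpos) hQpos, sq_nonneg gbar,
      mul_pos hKpos hQpos]
  -- per-client deviation bound
  have hdev : ∀ k, ∑ q, (g k q - gbar) ^ 2 ≤ 4 * G ^ 2 := by
    intro k
    have : ∑ q, (g k q - gbar) ^ 2 ≤ ∑ q, (2 * (g k q) ^ 2 + 2 * gbar ^ 2) :=
      Finset.sum_le_sum fun q _ => by nlinarith [sq_nonneg (g k q + gbar)]
    calc ∑ q, (g k q - gbar) ^ 2 ≤ ∑ q, (2 * (g k q) ^ 2 + 2 * gbar ^ 2) := this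
      _ = 2 * ∑ q, (g k q) ^ 2 + 2 * ((Q : ℝ) * gbar ^ 2) := by
          rw [Finset.sum_add_distrib, ← Finset.mul_sum]
          simp [mul_comm, mul_assoc, mul_left_comm]
      _ ≤ 2 * G ^ 2 + 2 * G ^ 2 := by
          have := hsq k
          have := hgbar_sq
          linarith
      _ = 4 * G ^ 2 := by ring
  -- rewrite the difference
  have hdiff : ∀ q, (∑ k, ((Nf k / NF : ℝ) : ℂ) * ((g k q : ℝ) : ℂ)) - ghat q
      = ∑ k, ((Nf k / NF : ℝ) : ℂ) * (1 - c k) * (((g k q - gbar : ℝ)) : ℂ) := by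
    intro q
    rw [hghat, sub_add_eq_sub_sub, ← Finset.sum_sub_distrib, ← Finset.sum_sub_distrib]
    apply Finset.sum_congr rfl
    intro k _
    push_cast
    ring
  -- pointwise bound via triangle inequality + Cauchy–Schwarz
  have hq : ∀ q, ‖∑ k, ((Nf k / NF : ℝ) : ℂ) * ((g k q : ℝ) : ℂ) - ghat q‖ ^ 2
      ≤ (∑ k, (Nf k / NF) ^ 2 * ‖1 - c k‖ ^ 2) * ∑ k, (g k q - gbar) ^ 2 := by
    intro q
    rw [hdiff q]
    have htri : ‖∑ k, ((Nf k / NF : ℝ) : ℂ) * (1 - c k) * (((g k q - gbar : ℝ)) : ℂ)‖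
        ≤ ∑ k, (Nf k / NF * ‖1 - c k‖) * |g k q - gbar| := by
      refine le_trans (norm_sum_le _ _) (le_of_eq ?_)
      apply Finset.sum_congr rfl
      intro k _
      rw [norm_mul, norm_mul, Complex.norm_real, Complex.norm_real, Real.norm_eq_abs, Real.norm_eq_abs]
      rw [abs_of_nonneg (div_nonneg (hNf k).le hNFpos.le)]
    have hnn : (0:ℝ) ≤ ∑ k, (Nf k / NF * ‖1 - c k‖) * |g k q - gbar| :=
      Finset.sum_nonneg fun k _ => mul_nonneg (mul_nonneg (div_nonneg (hNf k).le hNFpos.le) (norm_nonneg _)) (abs_nonneg _)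
    have h1 : ‖∑ k, ((Nf k / NF : ℝ) : ℂ) * (1 - c k) * (((g k q - gbar : ℝ)) : ℂ)‖ ^ 2
        ≤ (∑ k, (Nf k / NF * ‖1 - c k‖) * |g k q - gbar|) ^ 2 :=
      pow_le_pow_left₀ (norm_nonneg _) htri 2
    have h2 := Finset.sum_mul_sq_le_sq_mul_sq Finset.univ
      (fun k => Nf k / NF * ‖1 - c k‖) (fun k => |g k q - gbar|)
    refine h1.trans (h2.trans (le_of_eq ?_))
    congr 1
    · exact Finset.sum_congr rfl fun k _ => by rw [mul_pow]
    · exact Finset.sum_congr rfl fun k _ => sq_abs _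
  -- combine
  calc ∑ q, ‖∑ k, ((Nf k / NF : ℝ) : ℂ) * ((g k q : ℝ) : ℂ) - ghat q‖ ^ 2
      ≤ ∑ q : Fin Q, (∑ k, (Nf k / NF) ^ 2 * ‖1 - c k‖ ^ 2) * ∑ k, (g k q - gbar) ^ 2 :=
        Finset.sum_le_sum fun q _ => hq q
    _ = (∑ k, (Nf k / NF) ^ 2 * ‖1 - c k‖ ^ 2) * ∑ k, ∑ q, (g k q - gbar) ^ 2 := by
        rw [← Finset.mul_sum, Finset.sum_comm]
    _ ≤ (∑ k, (Nf k / NF) ^ 2 * ‖1 - c k‖ ^ 2) * ((K : ℝ) * (4 * G ^ 2)) := by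
        have hle : ∑ k : Fin K, ∑ q, (g k q - gbar) ^ 2 ≤ (K : ℝ) * (4 * G ^ 2) := by
          calc ∑ k : Fin K, ∑ q, (g k q - gbar) ^ 2 ≤ ∑ _k : Fin K, 4 * G ^ 2 :=
              Finset.sum_le_sum fun k _ => hdev k
            _ = (K : ℝ) * (4 * G ^ 2) := by simp [mul_comm]
        exact mul_le_mul_of_nonneg_left hle
          (Finset.sum_nonneg fun k _ => mul_nonneg (sq_nonneg _) (sq_nonneg _))
    _ = 4 * K * G ^ 2 / NF ^ 2 * ∑ k, Nf k ^ 2 * ‖1 - c k‖ ^ 2 := by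
        rw [Finset.sum_mul, Finset.mul_sum]
        apply Finset.sum_congr rfl
        intro k _
        field_simp
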